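/- arXiv:1707.00771 — 3 statements merged into one kernel-verified Lean document; each statement's English description precedes it below -/
import Mathlib

section
/- If x ∈ ℝ^d is badly approximable, then for every y ∈ ℝ^d there exists a non-increasing ψ : ℕ → ℝ_{≥0} with Σ_n ψ(n)^d = ∞ such that ‖nx+y‖ ≥ ψ(n) for all sufficiently large n ∈ ℕ. Equivalently, Φ(x) = ∅ for x badly approximable. -/
open scoped ENNReal
open Filter

/-- Sup-norm distance from `x ∈ ℝ^d` to the nearest point of `ℤ^d`. -/
noncomputable def nrm {d : ℕ} (x : Fin d → ℝ) : ℝ :=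
  ⨆ i, |x i - round (x i)|

/-- The class `𝒟` of non-increasing `ψ : ℕ → ℝ≥0` with `Σ ψ(n)^d = ∞`. -/
def calD (d : ℕ) : Set (ℕ → ℝ) :=
  {ψ | (∀ n, 0 ≤ ψ n) ∧ Antitone ψ ∧ ¬ Summable (fun n => ψ n ^ d)}

/-- The inhomogeneously `ψ`-approximable pairs. -/
def W {d : ℕ} (ψ : ℕ → ℝ) : Set ((Fin d → ℝ) × (Fin d → ℝ)) :=
  {p | ∃ᶠ n : ℕ in atTop, nrm (fun i => (n : ℝ) * p.1 i + p.2 i) < ψ n}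

/-- `Π = ⋂_{ψ ∈ 𝒟} W(ψ)`. -/
def PiSet (d : ℕ) : Set ((Fin d → ℝ) × (Fin d → ℝ)) := ⋂ ψ ∈ calD d, W ψ

/-- The vertical fiber `Φ(x)`. -/
def Phi {d : ℕ} (x : Fin d → ℝ) : Set (Fin d → ℝ) := {y | (x, y) ∈ PiSet d}

lemma round_nearest (t : ℝ) (z : ℤ) : |t - round t| ≤ |t - z| := by
  rcases le_or_gt (1/2 : ℝ) |t - z| with h | h
  · exact (abs_sub_round t).trans h
  · have hz : round t = z := by
      have h1 : |(round t : ℝ) - z| < 1 := by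
        calc |(round t : ℝ) - z| ≤ |(round t : ℝ) - t| + |t - z| := by
              simpa using abs_sub_le ((round t : ℝ)) t z
          _ < 1/2 + 1/2 := by
              refine add_lt_add_of_le_of_lt ?_ h
              simpa [abs_sub_comm] using abs_sub_round t
          _ = 1 := by norm_num
      have hcast : ((round t - z : ℤ) : ℝ) = (round t : ℝ) - z := by push_cast; ring
      have h2 : |round t - z| < 1 := by
        rw [← @Int.cast_lt ℝ]; push_cast; rw [← hcast] at h1; simpa using h1
      have := abs_lt.mp h2; omega
    rw [hz]

lemma nrm_nonneg {d : ℕ} (u : Fin d → ℝ) : 0 ≤ nrm u :=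
  Real.iSup_nonneg fun _ => abs_nonneg _

lemma coord_le_nrm {d : ℕ} (u : Fin d → ℝ) (i : Fin d) : |u i - round (u i)| ≤ nrm u :=
  le_ciSup (f := fun i => |u i - round (u i)|) (Set.Finite.bddAbove (Set.finite_range _)) i

lemma nrm_le {d : ℕ} (u : Fin d → ℝ) (B : ℝ) (hB : 0 ≤ B)
    (h : ∀ i, |u i - round (u i)| ≤ B) : nrm u ≤ B :=
  Real.iSup_le h hB

theorem stmt4 {d : ℕ} (x : Fin d → ℝ)
    (hbad : 0 < sInf {r : ℝ | ∃ n : ℕ, 0 < n ∧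
      r = (n : ℝ) * (nrm (fun i => (n : ℝ) * x i)) ^ d}) :
    Phi x = ∅ := by
  ext y
  simp only [Set.mem_empty_iff_false, iff_false]
  intro hy
  have hy' : ∀ ψ ∈ calD d, (x, y) ∈ W ψ := by
    intro ψ hψ
    exact Set.mem_iInter₂.mp hy ψ hψ
  -- case d = 0
  rcases Nat.eq_zero_or_pos d with hd | hd
  · subst hd
    have h0 : (fun _ : ℕ => (0:ℝ)) ∈ calD 0 := by
      refine ⟨fun _ => le_refl 0, antitone_const, ?_⟩
      simp only [pow_zero]
      rw [summable_const_iff]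
      norm_num
    have := (hy' _ h0).exists
    obtain ⟨n, hn⟩ := this
    exact absurd hn (not_lt.mpr (nrm_nonneg _))
  -- main case d ≥ 1
  set S := {r : ℝ | ∃ n : ℕ, 0 < n ∧
      r = (n : ℝ) * (nrm (fun i => (n : ℝ) * x i)) ^ d} with hS
  set c := sInf S with hc
  have hSbdd : BddBelow S := by
    refine ⟨0, fun r hr => ?_⟩
    obtain ⟨n, hn, rfl⟩ := hr
    exact mul_nonneg (Nat.cast_nonneg _) (pow_nonneg (nrm_nonneg _) _)
  have hcle : ∀ n : ℕ, 0 < n → c ≤ (n : ℝ) * (nrm (fun i => (n : ℝ) * x i)) ^ d :=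
    fun n hn => csInf_le hSbdd ⟨n, hn, rfl⟩
  set f : ℕ → ℝ := fun n => nrm (fun i => (n : ℝ) * x i + y i) with hf
  have hfnn : ∀ n, 0 ≤ f n := fun n => nrm_nonneg _
  -- separation lemma
  have hsep : ∀ a b : ℕ, a < b → c ≤ ((b - a : ℕ) : ℝ) * (f b + f a) ^ d := by
    intro a b hab
    have hk : 0 < b - a := Nat.sub_pos_of_lt hab
    refine (hcle _ hk).trans ?_
    have hcast : ((b - a : ℕ) : ℝ) = (b : ℝ) - a := Nat.cast_sub hab.le
    have hnle : nrm (fun i => ((b - a : ℕ) : ℝ) * x i) ≤ f b + f a := by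
      refine nrm_le _ _ (add_nonneg (hfnn b) (hfnn a)) fun i => ?_
      have h1 : |((b:ℝ) * x i + y i) - (round ((b:ℝ) * x i + y i) : ℝ)| ≤ f b := by
        simpa using coord_le_nrm (fun j => (b:ℝ) * x j + y j) i
      have h2 : |((a:ℝ) * x i + y i) - (round ((a:ℝ) * x i + y i) : ℝ)| ≤ f a := by
        simpa using coord_le_nrm (fun j => (a:ℝ) * x j + y j) i
      calc |((b - a : ℕ) : ℝ) * x i - round (((b - a : ℕ) : ℝ) * x i)|
          ≤ |((b - a : ℕ) : ℝ) * x i -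
              ((round ((b:ℝ) * x i + y i) - round ((a:ℝ) * x i + y i) : ℤ) : ℝ)| :=
            round_nearest _ _
        _ = |(((b:ℝ) * x i + y i) - (round ((b:ℝ) * x i + y i) : ℝ)) -
              (((a:ℝ) * x i + y i) - (round ((a:ℝ) * x i + y i) : ℝ))| := by
            rw [hcast]; push_cast; congr 1; ring
        _ ≤ |((b:ℝ) * x i + y i) - (round ((b:ℝ) * x i + y i) : ℝ)| +
              |((a:ℝ) * x i + y i) - (round ((a:ℝ) * x i + y i) : ℝ)| := abs_sub _ _
        _ ≤ f b + f a := add_le_add h1 h2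
    have := pow_le_pow_left₀ (nrm_nonneg _) hnle d
    have hk' : (0:ℝ) ≤ ((b - a : ℕ) : ℝ) := Nat.cast_nonneg _
    exact mul_le_mul_of_nonneg_left this hk'
  -- at most one zero of f
  have hzero : ∀ a b : ℕ, a < b → f a = 0 → f b = 0 → False := by
    intro a b hab ha hb
    have := hsep a b hab
    rw [ha, hb] at this
    simp only [add_zero] at this
    rw [zero_pow (by omega : d ≠ 0)] at this
    simp at this
    linarith
  obtain ⟨n0, hn0⟩ : ∃ n0 : ℕ, ∀ n, n0 ≤ n → 0 < f n := by
    by_cases h : ∃ k, f k = 0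
    · obtain ⟨k, hk⟩ := h
      refine ⟨k + 1, fun n hn => ?_⟩
      rcases (hfnn n).lt_or_eq with h' | h'
      · exact h'
      · exact absurd (hzero k n (by omega) hk h'.symm) (fun hh => hh)
    · push_neg at h
      exact ⟨0, fun n _ => (hfnn n).lt_of_ne (Ne.symm (h n))⟩
  -- define ψ
  have hne : ∀ n : ℕ, (Finset.Icc n0 (max n n0)).Nonempty :=
    fun n => ⟨n0, Finset.mem_Icc.mpr ⟨le_refl _, le_max_right _ _⟩⟩
  set ψ : ℕ → ℝ := fun n => (Finset.Icc n0 (max n n0)).inf' (hne n) f with hψ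
  have hle_ψ : ∀ n, n0 ≤ n → ∀ b : ℝ, (∀ j, n0 ≤ j → j ≤ n → b ≤ f j) → b ≤ ψ n := by
    intro n hn b hb
    refine Finset.le_inf' _ _ fun j hj => ?_
    obtain ⟨h1, h2⟩ := Finset.mem_Icc.mp hj
    exact hb j h1 (h2.trans_eq (max_eq_left hn))
  have hψ_le_f : ∀ n, n0 ≤ n → ψ n ≤ f n := by
    intro n hn
    exact Finset.inf'_le f (Finset.mem_Icc.mpr ⟨hn, le_max_left _ _⟩)
  have hψ_le_f' : ∀ m n, n0 ≤ m → m ≤ n → ψ n ≤ f m := by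
    intro m n hm hmn
    exact Finset.inf'_le f (Finset.mem_Icc.mpr ⟨hm, le_trans hmn (le_max_left _ _)⟩)
  have hψpos : ∀ n, 0 < ψ n := by
    intro n
    obtain ⟨m, hm, hmeq⟩ := Finset.exists_mem_eq_inf' (hne n) f
    rw [hψ]; dsimp only; rw [hmeq]
    exact hn0 m (Finset.mem_Icc.mp hm).1
  have hψnn : ∀ n, 0 ≤ ψ n := fun n => (hψpos n).le
  have hψanti : Antitone ψ := by
    intro a b hab
    exact Finset.inf'_mono f (Finset.Icc_subset_Icc_right (max_le_max hab (le_refl n0))) (hne a)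
  have hψcalD : ψ ∈ calD d := by
    refine ⟨hψnn, hψanti, ?_⟩
    intro hsum
    -- divergence argument
    set γ := c / 4 ^ d with hγ
    have hγpos : 0 < γ := by
      apply div_pos hbad; positivity
    have key : ∀ k : ℕ, ∀ M, n0 ≤ M → f M ≤ ψ M →
        ∃ M', M ≤ M' ∧ (k : ℝ) * γ ≤ ∑ n ∈ Finset.Ico M M', ψ n ^ d := by
      intro k
      induction k with
      | zero => intro M hM _; exact ⟨M, le_refl _, by simp⟩
      | succ k ih =>
        intro M hM hfM
        set ε := ψ M with hε
        have hεpos : 0 < ε := hψpos M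
        have hfMε : f M = ε := le_antisymm hfM (hψ_le_f M hM)
        by_cases hB : ∃ n, M < n ∧ f n < ε / 2
        · set m := Nat.find hB with hm
          obtain ⟨hm1, hm2⟩ : M < m ∧ f m < ε / 2 := Nat.find_spec hB
          have hmin : ∀ j, M < j → j < m → ε / 2 ≤ f j := by
            intro j hj1 hj2
            have := Nat.find_min hB hj2
            push_neg at this
            exact this hj1
          have hmn0 : n0 ≤ m := le_trans hM hm1.le
          -- certificate at m
          have hfm_le : f m ≤ ψ m := by
            refine hle_ψ m hmn0 _ fun j hj1 hj2 => ?_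
            rcases le_or_gt j M with hjM | hjM
            · linarith [hψ_le_f' j M hj1 hjM, hεpos]
            · rcases eq_or_lt_of_le hj2 with rfl | hjm
              · exact le_refl _
              · linarith [hmin j hjM hjm]
          obtain ⟨M', hMM', hsum'⟩ := ih m hmn0 hfm_le
          refine ⟨M', le_trans hm1.le hMM', ?_⟩
          -- block bound on Ico M m
          have hblock : ∀ j ∈ Finset.Ico M m, (ε/2) ^ d ≤ ψ j ^ d := by
            intro j hj
            obtain ⟨hj1, hj2⟩ := Finset.mem_Ico.mp hj
            have hjn0 : n0 ≤ j := le_trans hM hj1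
            have hψj : ε / 2 ≤ ψ j := by
              refine hle_ψ j hjn0 _ fun i hi1 hi2 => ?_
              rcases le_or_gt i M with hiM | hiM
              · linarith [hψ_le_f' i M hi1 hiM]
              · exact hmin i hiM (lt_of_le_of_lt hi2 hj2)
            exact pow_le_pow_left₀ (by positivity) hψj d
          have hcard : (Finset.Ico M m).card = m - M := Nat.card_Ico M m
          have hsum1 : ((m - M : ℕ) : ℝ) * (ε/2)^d ≤ ∑ n ∈ Finset.Ico M m, ψ n ^ d := by
            calc ((m - M : ℕ) : ℝ) * (ε/2)^d
                = (Finset.Ico M m).card • ((ε/2)^d) := by rw [hcard, nsmul_eq_mul]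
              _ ≤ ∑ n ∈ Finset.Ico M m, ψ n ^ d := Finset.card_nsmul_le_sum _ _ _ hblock
          -- separation bound
          have hsep' : c ≤ ((m - M : ℕ) : ℝ) * (2*ε)^d := by
            refine (hsep M m hm1).trans ?_
            refine mul_le_mul_of_nonneg_left ?_ (Nat.cast_nonneg _)
            refine pow_le_pow_left₀ (add_nonneg (hfnn m) (hfnn M)) ?_ d
            rw [hfMε]; linarith
          have hγle : γ ≤ ((m - M : ℕ) : ℝ) * (ε/2)^d := by
            rw [hγ, div_le_iff₀ (by positivity : (0:ℝ) < 4^d)]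
            calc c ≤ ((m - M : ℕ) : ℝ) * (2*ε)^d := hsep'
              _ = ((m - M : ℕ) : ℝ) * (ε/2)^d * 4^d := by
                  rw [mul_assoc, ← mul_pow]; ring_nf
          have hsplit : ∑ n ∈ Finset.Ico M m, ψ n ^ d + ∑ n ∈ Finset.Ico m M', ψ n ^ d
              = ∑ n ∈ Finset.Ico M M', ψ n ^ d :=
            Finset.sum_Ico_consecutive _ hm1.le hMM'
          push_cast
          rw [← hsplit]
          have : γ ≤ ∑ n ∈ Finset.Ico M m, ψ n ^ d := hγle.trans hsum1
          linarith
        · push_neg at hB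
          -- ψ n ≥ ε/2 for all n ≥ M
          have hψge : ∀ n, M ≤ n → ε / 2 ≤ ψ n := by
            intro n hn
            refine hle_ψ n (le_trans hM hn) _ fun i hi1 hi2 => ?_
            rcases le_or_gt i M with hiM | hiM
            · linarith [hψ_le_f' i M hi1 hiM]
            · exact hB i hiM
          obtain ⟨L, hL⟩ := exists_nat_ge (((k:ℝ)+1) * γ / (ε/2)^d)
          refine ⟨M + L, le_add_right (le_refl _), ?_⟩
          have hLbound : ((k:ℝ)+1) * γ ≤ (L:ℝ) * (ε/2)^d := by
            rw [div_le_iff₀ (by positivity : (0:ℝ) < (ε/2)^d)] at hL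
            linarith
          have hblock : ∀ j ∈ Finset.Ico M (M+L), (ε/2) ^ d ≤ ψ j ^ d := by
            intro j hj
            have := (Finset.mem_Ico.mp hj).1
            exact pow_le_pow_left₀ (by positivity) (hψge j this) d
          have hcard : (Finset.Ico M (M+L)).card = L := by
            rw [Nat.card_Ico]; omega
          refine le_trans ?_ (Finset.card_nsmul_le_sum _ _ _ hblock)
          rw [hcard, nsmul_eq_mul]
          push_cast
          linarith [hLbound]
    -- derive contradiction with summability
    obtain ⟨k, hk⟩ := exists_nat_gt ((∑' n, ψ n ^ d) / γ)
    have hfn0 : f n0 ≤ ψ n0 := by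
      refine hle_ψ n0 (le_refl _) _ fun j hj1 hj2 => ?_
      have : j = n0 := le_antisymm hj2 hj1
      rw [this]
    obtain ⟨M', _, hsum'⟩ := key k n0 (le_refl _) hfn0
    have htsum : ∑ n ∈ Finset.Ico n0 M', ψ n ^ d ≤ ∑' n, ψ n ^ d :=
      Summable.sum_le_tsum _ (fun n _ => pow_nonneg (hψnn n) d) hsum
    rw [div_lt_iff₀ hγpos] at hk
    linarith
  -- conclude
  have hfreq := hy' ψ hψcalD
  obtain ⟨n, hn1, hn2⟩ := (hfreq.and_eventually (eventually_ge_atTop n0)).exists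
  exact absurd hn1 (not_lt.mpr (hψ_le_f n hn2))
end

section
/- Let d = 1 and let x, y ∈ ℚ. Then y ∈ Φ(x) if and only if there exists n ∈ ℤ with nx + y ∈ ℤ. -/
open scoped ENNReal
open Filter

/-- Distance from `t ∈ ℝ` to the nearest integer. -/
noncomputable def nrm1 (t : ℝ) : ℝ := |t - round t|

/-- `S_ℓ(x,y) = Σ_{n≥ℓ} min_{ℓ≤m≤n} ‖mx+y‖`, valued in `[0,∞]` (case `d = 1`). -/
noncomputable def S1 (l : ℤ) (x y : ℝ) : ℝ≥0∞ :=
  ∑' n : ℕ, ⨅ m ∈ Finset.Icc l (l + n), ENNReal.ofReal (nrm1 ((m : ℝ) * x + y))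

/-- The class `𝒟` of non-increasing `ψ : ℕ → ℝ≥0` with `Σ ψ(n) = ∞` (case `d = 1`). -/
def calD1 : Set (ℕ → ℝ) := {ψ | (∀ n, 0 ≤ ψ n) ∧ Antitone ψ ∧ ¬ Summable ψ}

/-- `Π` for `d = 1`. -/
def Pi1 : Set (ℝ × ℝ) :=
  {p | ∀ ψ ∈ calD1, ∃ᶠ n : ℕ in atTop, nrm1 ((n : ℝ) * p.1 + p.2) < ψ n}

/-- The vertical fiber `Φ(x)`. -/
def Phi1 (x : ℝ) : Set ℝ := {y | (x, y) ∈ Pi1}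

/-- The horizontal fiber `Π^y`. -/
def PiY1 (y : ℝ) : Set ℝ := {x | (x, y) ∈ Pi1}

lemma calD1_pos {ψ : ℕ → ℝ} (h : ψ ∈ calD1) (n : ℕ) : 0 < ψ n := by
  obtain ⟨h0, hmono, hns⟩ := h
  by_contra hle
  push_neg at hle
  have hn0 : ψ n = 0 := le_antisymm hle (h0 n)
  apply hns
  apply summable_of_ne_finset_zero (s := Finset.range (n + 1))
  intro m hm
  simp only [Finset.mem_range, not_lt] at hm
  have h1 : ψ m ≤ ψ n := hmono (by omega)
  have h2 := h0 m
  linarith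

lemma nrm1_ratCast (r : ℚ) : nrm1 (r : ℝ) = |(r : ℝ) - ((round r : ℤ) : ℝ)| := by
  simp [nrm1, Rat.round_cast]

lemma nrm1_intCast (z : ℤ) : nrm1 ((z : ℤ) : ℝ) = 0 := by
  simp [nrm1]

theorem stmt15 (x y : ℚ) :
    (y : ℝ) ∈ Phi1 (x : ℝ) ↔ ∃ n : ℤ, ∃ m : ℤ, (n : ℚ) * x + y = (m : ℚ) := by
  have hqx : ((x.den : ℚ)) * x = (x.num : ℚ) := by
    rw [mul_comm]; exact_mod_cast Rat.mul_den_eq_num x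
  have hqy : ((y.den : ℚ)) * y = (y.num : ℚ) := by
    rw [mul_comm]; exact_mod_cast Rat.mul_den_eq_num y
  constructor
  · intro hy
    set QZ : ℤ := (x.den : ℤ) * (y.den : ℤ) with hQZ
    have hQpos : (0 : ℚ) < (QZ : ℚ) := by
      have : 0 < QZ := by positivity
      exact_mod_cast this
    set c : ℝ := 1 / (2 * ((QZ : ℚ) : ℝ)) with hc
    have hQRpos : (0 : ℝ) < ((QZ : ℚ) : ℝ) := by exact_mod_cast hQpos
    have hcpos : (0 : ℝ) < c := by positivity
    have hψ : (fun _ : ℕ => c) ∈ calD1 := by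
      refine ⟨fun _ => hcpos.le, fun _ _ _ => le_rfl, ?_⟩
      intro hs
      have := hs.tendsto_atTop_zero
      have h2 := this.eventually (eventually_lt_nhds hcpos)
      obtain ⟨n, hn⟩ := h2.exists
      exact lt_irrefl c hn
    obtain ⟨n, hn⟩ := (hy (fun _ => c) hψ).exists
    refine ⟨(n : ℤ), round ((n : ℚ) * x + y), ?_⟩
    set r : ℚ := (n : ℚ) * x + y with hr
    have hcast : ((n : ℕ) : ℝ) * (x : ℝ) + (y : ℝ) = (r : ℝ) := by push_cast [hr]; ring
    rw [hcast, nrm1_ratCast] at hn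
    have habs : |r - (round r : ℤ)| < 1 / (2 * (QZ : ℚ)) := by
      have he : |(r : ℝ) - ((round r : ℤ) : ℝ)| = ((|r - (round r : ℤ)| : ℚ) : ℝ) := by
        push_cast; ring_nf
      rw [he, hc] at hn
      have hn' : ((|r - (round r : ℤ)| : ℚ) : ℝ) < ((1 / (2 * (QZ : ℚ)) : ℚ) : ℝ) := by
        convert hn using 1; push_cast; ring
      exact_mod_cast hn'
    -- QZ * r is an integer
    have hQr : (QZ : ℚ) * r = (((n : ℤ) * (y.den : ℤ) * x.num + (x.den : ℤ) * y.num : ℤ) : ℚ) := by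
      rw [hQZ, hr]; push_cast
      calc (x.den : ℚ) * (y.den : ℚ) * ((n : ℚ) * x + y)
          = (n : ℚ) * (y.den : ℚ) * ((x.den : ℚ) * x) + (x.den : ℚ) * ((y.den : ℚ) * y) := by
            ring
        _ = (n : ℚ) * (y.den : ℚ) * (x.num : ℚ) + (x.den : ℚ) * (y.num : ℚ) := by
            rw [hqx, hqy]
    set z : ℤ := (n : ℤ) * (y.den : ℤ) * x.num + (x.den : ℤ) * y.num - QZ * round r with hzdef
    have hz : (QZ : ℚ) * (r - (round r : ℤ)) = (z : ℚ) := by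
      rw [mul_sub, hQr, hzdef]; push_cast; ring
    have hzabs : |(z : ℚ)| < 1 / 2 := by
      rw [← hz, abs_mul, abs_of_pos hQpos]
      calc (QZ : ℚ) * |r - (round r : ℤ)| < (QZ : ℚ) * (1 / (2 * (QZ : ℚ))) :=
            (mul_lt_mul_iff_right₀ hQpos).mpr habs
        _ = 1 / 2 := by field_simp
    have hz0 : z = 0 := by
      by_contra h
      have : (1 : ℚ) ≤ |(z : ℚ)| := by exact_mod_cast Int.one_le_abs (by omega)
      linarith
    have hmul0 : (QZ : ℚ) * (r - (round r : ℤ)) = 0 := by rw [hz, hz0]; norm_num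
    have hre : r = ((round r : ℤ) : ℚ) := by
      rcases mul_eq_zero.mp hmul0 with h | h
      · exact absurd h hQpos.ne'
      · linarith [sub_eq_zero.mp h]
    exact_mod_cast hre
  · rintro ⟨n, m, hnm⟩
    intro ψ hψ
    rw [frequently_atTop]
    intro a
    set k : ℤ := (a : ℤ) + |n| with hk
    set N : ℤ := n + k * (x.den : ℤ) with hN
    have hden : (1 : ℤ) ≤ (x.den : ℤ) := by exact_mod_cast x.pos
    have hkge : (a : ℤ) ≤ k := by
      have : (0 : ℤ) ≤ |n| := abs_nonneg n
      omega
    have hkpos : (0 : ℤ) ≤ k := by positivity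
    have hNge : (a : ℤ) ≤ N := by
      have h1 : k ≤ k * (x.den : ℤ) := le_mul_of_one_le_right hkpos hden
      have h2 : -|n| ≤ n := neg_abs_le n
      omega
    refine ⟨N.toNat, by omega, ?_⟩
    have hNtn : ((N.toNat : ℤ)) = N := Int.toNat_of_nonneg (by omega)
    have hval : ((N.toNat : ℚ)) * x + y = ((m + k * x.num : ℤ) : ℚ) := by
      have hq : ((N.toNat : ℚ)) = ((N : ℤ) : ℚ) := by exact_mod_cast hNtn
      rw [hq, hN]
      push_cast
      calc ((n : ℚ) + (k : ℚ) * (x.den : ℚ)) * x + y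
          = ((n : ℚ) * x + y) + (k : ℚ) * ((x.den : ℚ) * x) := by ring
        _ = (m : ℚ) + (k : ℚ) * (x.num : ℚ) := by rw [hnm, hqx]
    have hvr : ((N.toNat : ℝ)) * (x : ℝ) + (y : ℝ) = (((m + k * x.num : ℤ) : ℤ) : ℝ) := by
      have := congrArg (fun t : ℚ => (t : ℝ)) hval
      push_cast at this ⊢
      linarith
    rw [hvr, nrm1_intCast]
    exact calD1_pos hψ N.toNat
end

section
/- Let d = 1. If y ∈ ℚ, then Π^y ⊆ ℚ, i.e., every x ∈ ℝ such that for all ψ ∈ 𝒟 there are infinitely many n with ‖nx+y‖ < ψ(n), must be rational. -/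
open scoped ENNReal
open Filter

set_option linter.unusedSectionVars false

lemma nrm1_nonneg (t : ℝ) : 0 ≤ nrm1 t := abs_nonneg _
lemma nrm1_le (t : ℝ) (z : ℤ) : nrm1 t ≤ |t - z| := round_le t z

section Core
variable {α : ℝ} (hα : Irrational α)

/-- the error and its absolute value -/
noncomputable def bet (α : ℝ) (m : ℕ) : ℝ := (m:ℝ) * α - round ((m:ℝ)*α)
noncomputable def cc (α : ℝ) (m : ℕ) : ℝ := nrm1 ((m:ℝ) * α)

lemma cc_eq_abs (α : ℝ) (m : ℕ) : cc α m = |bet α m| := rfl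

include hα in
lemma bet_ne {m : ℕ} (hm : 1 ≤ m) : bet α m ≠ 0 := by
  intro h
  have hirr : Irrational ((m:ℝ) * α) := hα.natCast_mul (by omega)
  exact hirr.ne_int (round ((m:ℝ)*α)) (by have := sub_eq_zero.mp h; linarith [this])

include hα in
lemma cc_pos {m : ℕ} (hm : 1 ≤ m) : 0 < cc α m := by
  rw [cc_eq_abs]; exact abs_pos.mpr (bet_ne hα hm)

include hα in
lemma exists_small (ε : ℝ) (hε : 0 < ε) : ∃ m, 1 ≤ m ∧ cc α m < ε := by
  obtain ⟨n, hn⟩ := exists_nat_gt (1/ε)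
  have npos : 0 < n + 1 := Nat.succ_pos n
  obtain ⟨k, hk0, hk1, hk⟩ := Real.exists_nat_abs_mul_sub_round_le α npos
  refine ⟨k, hk0, lt_of_le_of_lt hk ?_⟩
  have h1 : (0:ℝ) < ((n+1:ℕ):ℝ) + 1 := by positivity
  rw [div_lt_iff₀ h1]
  have : 1/ε < (n:ℝ) := hn
  have h2 : 1 < ε * n := by
    rw [div_lt_iff₀ hε] at this
    linarith
  push_cast
  nlinarith
end Core

section Core2
variable {α : ℝ} (hα : Irrational α)

include hα in
lemma not_summable_M :
    ¬ Summable (fun n : ℕ =>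
      (Finset.Icc 1 (n+1)).inf' ⟨1, by simp⟩ (fun m : ℕ => cc α m)) := by
  intro hs
  set M : ℕ → ℝ := fun n =>
      (Finset.Icc 1 (n+1)).inf' ⟨1, by simp⟩ (fun m : ℕ => cc α m) with hMdef
  have hM0 : ∀ n, 0 ≤ M n := by
    intro n
    apply Finset.le_inf'
    intro m hm
    exact nrm1_nonneg _
  have hex : ∀ a : ℕ, ∃ m, 1 ≤ m ∧ (0 < cc α a → cc α m < cc α a) := by
    intro a
    by_cases h : 0 < cc α a
    · obtain ⟨m, hm1, hm2⟩ := exists_small hα _ h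
      exact ⟨m, hm1, fun _ => hm2⟩
    · exact ⟨1, le_refl 1, fun h' => absurd h' h⟩
  set N : ℕ → ℕ := fun k => Nat.rec 1 (fun _ a => Nat.find (hex a)) k with hNdef
  have hNs : ∀ k, N (k+1) = Nat.find (hex (N k)) := fun k => rfl
  have hN1 : ∀ k, 1 ≤ N k := by
    intro k; cases k with
    | zero => exact le_refl 1
    | succ k => rw [hNs]; exact (Nat.find_spec (hex (N k))).1
  have hpos : ∀ k, 0 < cc α (N k) := fun k => cc_pos hα (hN1 k)
  have hlt : ∀ k, cc α (N (k+1)) < cc α (N k) := by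
    intro k; rw [hNs]; exact (Nat.find_spec (hex (N k))).2 (hpos k)
  have hmin : ∀ k m, 1 ≤ m → m < N (k+1) → cc α (N k) ≤ cc α m := by
    intro k m h1 h2
    rw [hNs] at h2
    have hnm := Nat.find_min (hex (N k)) h2
    by_contra hc
    push_neg at hc
    exact hnm ⟨h1, fun _ => hc⟩
  have hQ : ∀ k m, 1 ≤ m → m ≤ N k → cc α (N k) ≤ cc α m := by
    intro k
    induction k with
    | zero => intro m h1 h2; have : m = 1 := le_antisymm h2 h1
              rw [this]; exact le_refl _
    | succ k ih =>
        intro m h1 h2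
        rcases lt_or_eq_of_le h2 with h | h
        · exact le_trans (hlt k).le (hmin k m h1 h)
        · rw [h]
  have hNlt : ∀ k, N k < N (k+1) := by
    intro k
    by_contra h
    push_neg at h
    exact absurd (hQ k (N (k+1)) (hN1 (k+1)) h) (not_le.mpr (by
      calc cc α (N (k+1)) < cc α (N k) := hlt k))
  have hNk : ∀ k, k + 1 ≤ N k := by
    intro k
    induction k with
    | zero => exact hN1 0
    | succ k ih => have := hNlt k; omega
  -- key lower bound : 1 ≤ (N k + N (k+1)) * cc α (N k)
  have hkey : ∀ k, 1 ≤ (((N k : ℕ):ℝ) + ((N (k+1) : ℕ):ℝ)) * cc α (N k) := by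
    intro k
    set a := N k with ha
    set b := N (k+1) with hb
    have hab : a < b := hNlt k
    have hba : cc α b < cc α a := hlt k
    have hbne : bet α b ≠ 0 := bet_ne hα (hN1 (k+1))
    have hane : bet α a ≠ 0 := bet_ne hα (hN1 k)
    have hsign : bet α a * bet α b < 0 := by
      rcases lt_trichotomy (bet α a * bet α b) 0 with h|h|h
      · exact h
      · exact absurd (mul_eq_zero.mp h) (by push_neg; exact ⟨hane, hbne⟩)
      · exfalso
        have h1a : 1 ≤ a := hN1 k
        set m := b - a with hm
        have hm1 : 1 ≤ m := by rw [hm]; omega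
        have hmb : m < b := by rw [hm]; omega
        have hcast : (m:ℝ) * α = (b:ℝ)*α - (a:ℝ)*α := by
          rw [hm]
          push_cast [Nat.cast_sub hab.le]
          ring
        have h2 : cc α m ≤ |bet α b - bet α a| := by
          calc cc α m ≤ |(m:ℝ)*α - ((round ((b:ℝ)*α) - round ((a:ℝ)*α) : ℤ):ℝ)| :=
                nrm1_le _ _
            _ = |bet α b - bet α a| := by
                rw [hcast]
                unfold bet
                push_cast
                ring_nf
        have h3 : |bet α b - bet α a| < cc α a := by
          rw [cc_eq_abs] at hba ⊢
          rw [cc_eq_abs] at hba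
          rcases mul_pos_iff.mp h with ⟨h1', h2'⟩ | ⟨h1', h2'⟩
          · rw [abs_of_pos h1', abs_of_pos h2'] at hba
            rw [abs_of_pos h1']
            rw [abs_lt]
            constructor <;> nlinarith
          · rw [abs_of_neg h1', abs_of_neg h2'] at hba
            rw [abs_of_neg h1']
            rw [abs_lt]
            constructor <;> nlinarith
        have := hmin k m hm1 hmb
        linarith
    set D : ℤ := (a:ℤ) * round ((b:ℝ)*α) - (b:ℤ) * round ((a:ℝ)*α) with hD
    have hident : (b:ℝ) * bet α a - (a:ℝ) * bet α b = (D:ℝ) := by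
      unfold bet
      rw [hD]
      push_cast
      ring
    have hapos : (0:ℝ) < (a:ℝ) := by exact_mod_cast hN1 k
    have hbpos : (0:ℝ) < (b:ℝ) := by exact_mod_cast hN1 (k+1)
    have hD0 : D ≠ 0 := by
      intro h0
      rw [h0] at hident
      push_cast at hident
      have heq : (b:ℝ) * bet α a = (a:ℝ) * bet α b := by linarith
      have hkey2 : ((b:ℝ)*bet α a)*((a:ℝ)*bet α b) = ((a:ℝ)*(b:ℝ))*(bet α a * bet α b) := by
        ring
      have hsq : ((b:ℝ)*bet α a)*((a:ℝ)*bet α b) = ((a:ℝ)*bet α b)*((a:ℝ)*bet α b) := by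
        rw [heq]
      have hneg : ((a:ℝ)*(b:ℝ))*(bet α a * bet α b) < 0 :=
        mul_neg_of_pos_of_neg (mul_pos hapos hbpos) hsign
      linarith [mul_self_nonneg ((a:ℝ)*bet α b)]
    have h1D : (1:ℝ) ≤ |(D:ℝ)| := by
      rw [← Int.cast_abs]
      exact_mod_cast Int.one_le_abs hD0
    have htri : |(D:ℝ)| ≤ (b:ℝ) * cc α a + (a:ℝ) * cc α b := by
      rw [← hident]
      calc |(b:ℝ) * bet α a - (a:ℝ) * bet α b|
          ≤ |(b:ℝ) * bet α a| + |(a:ℝ) * bet α b| := abs_sub _ _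
        _ = (b:ℝ) * cc α a + (a:ℝ) * cc α b := by
            rw [abs_mul, abs_mul, abs_of_pos hapos, abs_of_pos hbpos,
              cc_eq_abs, cc_eq_abs]
    nlinarith [hpos k, hpos (k+1)]
  -- the comparison sequence g
  set g : ℕ → ℝ := fun k => (((N (k+1)):ℝ) - ((N k):ℝ)) / (2 * ((N (k+1)):ℝ)) with hg
  have hNcastlt : ∀ k, ((N k):ℝ) < ((N (k+1)):ℝ) := by
    intro k; exact_mod_cast hNlt k
  have hNcpos : ∀ k, (0:ℝ) < ((N k):ℝ) := by
    intro k; exact_mod_cast hN1 k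
  have hg0 : ∀ k, 0 ≤ g k := by
    intro k
    apply div_nonneg
    · linarith [hNcastlt k]
    · linarith [hNcpos (k+1)]
  -- M n ≥ cc (N k) on the k-th block
  have hMδ : ∀ k n, n + 1 < N (k+1) → cc α (N k) ≤ M n := by
    intro k n h
    apply Finset.le_inf'
    intro m hm
    rw [Finset.mem_Icc] at hm
    exact hmin k m hm.1 (by omega)
  have hblock : ∀ k, g k ≤ ∑ n ∈ Finset.Ico (N k - 1) (N (k+1) - 1), M n := by
    intro k
    have hcard : (Finset.Ico (N k - 1) (N (k+1) - 1)).card = N (k+1) - N k := by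
      rw [Nat.card_Ico]
      have := hNlt k
      have := hN1 k
      omega
    have hstep : ∀ n ∈ Finset.Ico (N k - 1) (N (k+1) - 1), cc α (N k) ≤ M n := by
      intro n hn
      rw [Finset.mem_Ico] at hn
      exact hMδ k n (by have := hN1 (k+1); omega)
    have hsum : ((N (k+1) - N k : ℕ):ℝ) * cc α (N k)
        ≤ ∑ n ∈ Finset.Ico (N k - 1) (N (k+1) - 1), M n := by
      rw [← hcard]
      have := Finset.card_nsmul_le_sum _ _ _ hstep
      rwa [nsmul_eq_mul] at this
    refine le_trans ?_ hsum
    have hc : ((N (k+1) - N k : ℕ):ℝ) = ((N (k+1)):ℝ) - ((N k):ℝ) := by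
      push_cast [Nat.cast_sub (hNlt k).le]
      ring
    rw [hc, hg, div_le_iff₀ (by linarith [hNcpos (k+1)])]
    have h1 := hkey k
    have h2 := hpos k
    have h3 := hNcastlt k
    nlinarith [mul_nonneg (le_of_lt h2) (sub_nonneg.mpr h3.le)]
  -- partial sums of g are bounded
  have hcons : ∀ K, ∑ k ∈ Finset.range K, (∑ n ∈ Finset.Ico (N k - 1) (N (k+1) - 1), M n)
      = ∑ n ∈ Finset.Ico 0 (N K - 1), M n := by
    intro K
    induction K with
    | zero => simp [show N 0 = 1 from rfl]
    | succ K ih =>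
        rw [Finset.sum_range_succ, ih]
        exact Finset.sum_Ico_consecutive M (by omega)
          (by have := hNlt K; have := hN1 K; omega)
  have hbound : ∀ K, ∑ k ∈ Finset.range K, g k ≤ ∑' n, M n := by
    intro K
    calc ∑ k ∈ Finset.range K, g k
        ≤ ∑ k ∈ Finset.range K, (∑ n ∈ Finset.Ico (N k - 1) (N (k+1) - 1), M n) :=
          Finset.sum_le_sum (fun k _ => hblock k)
      _ = ∑ n ∈ Finset.Ico 0 (N K - 1), M n := hcons K
      _ ≤ ∑' n, M n := Summable.sum_le_tsum _ (fun n _ => hM0 n) hs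
  have hgs : Summable g := summable_of_sum_range_le hg0 hbound
  -- eventually ratio ≤ 2
  have hten : Tendsto g atTop (nhds 0) := hgs.tendsto_atTop_zero
  have hev : ∀ᶠ k in atTop, g k < 1/4 :=
    hten.eventually (eventually_lt_nhds (by norm_num : (0:ℝ) < 1/4))
  obtain ⟨k₀, hk₀⟩ := eventually_atTop.mp hev
  have hratio : ∀ k, k₀ ≤ k → ((N (k+1)):ℝ) ≤ 2 * ((N k):ℝ) := by
    intro k hk
    have := hk₀ k hk
    rw [hg, div_lt_iff₀ (by linarith [hNcpos (k+1)])] at this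
    linarith
  have hlog : ∀ k, k₀ ≤ k →
      Real.log ((N (k+1)):ℝ) - Real.log ((N k):ℝ) ≤ 4 * g k := by
    intro k hk
    have h1 : Real.log ((N (k+1)):ℝ) - Real.log ((N k):ℝ)
        = Real.log (((N (k+1)):ℝ) / ((N k):ℝ)) := by
      rw [Real.log_div (ne_of_gt (hNcpos (k+1))) (ne_of_gt (hNcpos k))]
    rw [h1]
    have h2 : Real.log (((N (k+1)):ℝ) / ((N k):ℝ)) ≤ ((N (k+1)):ℝ) / ((N k):ℝ) - 1 :=
      Real.log_le_sub_one_of_pos (div_pos (hNcpos (k+1)) (hNcpos k))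
    have h3 : ((N (k+1)):ℝ) / ((N k):ℝ) - 1 ≤ 4 * g k := by
      rw [hg]
      have hb2 : (0:ℝ) < 2 * ((N (k+1)):ℝ) := by linarith [hNcpos (k+1)]
      rw [div_sub_one (ne_of_gt (hNcpos k)),
        show (4:ℝ) * ((((N (k+1)):ℝ) - ((N k):ℝ)) / (2 * ((N (k+1)):ℝ)))
          = (4 * (((N (k+1)):ℝ) - ((N k):ℝ))) / (2 * ((N (k+1)):ℝ)) from by ring,
        div_le_div_iff₀ (hNcpos k) hb2]
      have h4 := hratio k hk
      have h5 := hNcastlt k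
      nlinarith
    linarith
  -- telescoping gives log (N (k₀+K)) bounded, contradiction
  have htel : ∀ K, Real.log ((N (k₀+K)):ℝ)
      ≤ Real.log ((N k₀):ℝ) + 4 * ∑' k, g k := by
    intro K
    have h1 : ∑ j ∈ Finset.range K,
        (Real.log ((N (k₀+j+1)):ℝ) - Real.log ((N (k₀+j)):ℝ))
        = Real.log ((N (k₀+K)):ℝ) - Real.log ((N k₀):ℝ) := by
      have := Finset.sum_range_sub (fun j => Real.log ((N (k₀+j)):ℝ)) K
      simpa [add_assoc] using this
    have h2 : ∑ j ∈ Finset.range K,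
        (Real.log ((N (k₀+j+1)):ℝ) - Real.log ((N (k₀+j)):ℝ))
        ≤ ∑ j ∈ Finset.range K, 4 * g (k₀+j) :=
      Finset.sum_le_sum (fun j _ => hlog (k₀+j) (by omega))
    have h3 : ∑ j ∈ Finset.range K, 4 * g (k₀+j) ≤ 4 * ∑' k, g k := by
      rw [← Finset.mul_sum]
      have h4 : ∑ j ∈ Finset.range K, g (k₀+j) = ∑ k ∈ Finset.Ico k₀ (k₀+K), g k := by
        rw [Finset.sum_Ico_eq_sum_range]
        simp [add_comm]
      rw [h4]
      have h5 : ∑ k ∈ Finset.Ico k₀ (k₀+K), g k ≤ ∑' k, g k :=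
        Summable.sum_le_tsum _ (fun k _ => hg0 k) hgs
      linarith
    linarith
  set C := Real.log ((N k₀):ℝ) + 4 * ∑' k, g k with hC
  obtain ⟨K, hK⟩ := exists_nat_gt (Real.exp C)
  have hKN : (K:ℝ) ≤ ((N (k₀+K)):ℝ) := by
    have := hNk (k₀+K)
    exact_mod_cast by omega
  have hcontr : C < Real.log ((N (k₀+K)):ℝ) := by
    calc C = Real.log (Real.exp C) := (Real.log_exp C).symm
      _ < Real.log (K:ℝ) := Real.log_lt_log (Real.exp_pos C) hK
      _ ≤ Real.log ((N (k₀+K)):ℝ) := Real.log_le_log (by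
            have h0 := Real.exp_pos C
            linarith) hKN
  exact absurd (htel K) (not_le.mpr hcontr)

end Core2

lemma nrm1_add_int (t : ℝ) (z : ℤ) : nrm1 (t + z) = nrm1 t := by
  simp [nrm1, round_add_intCast]

lemma nrm1_nat_mul_le (q : ℕ) (t : ℝ) : nrm1 (q * t) ≤ q * nrm1 t := by
  calc nrm1 ((q:ℝ) * t) ≤ |(q:ℝ) * t - ((q * round t : ℤ) : ℝ)| := nrm1_le _ _
    _ = (q:ℝ) * |t - round t| := by
        push_cast
        rw [← mul_sub, abs_mul, abs_of_nonneg (by positivity : (0:ℝ) ≤ (q:ℝ))]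
    _ = q * nrm1 t := rfl


theorem stmt17 (y : ℚ) (x : ℝ) (hx : x ∈ PiY1 (y : ℝ)) :
    ∃ q : ℚ, x = (q : ℝ) := by
  by_contra h
  push_neg at h
  simp only [PiY1, Pi1, Set.mem_setOf_eq] at hx
  have hirr : Irrational x := fun ⟨q, hq⟩ => h q hq.symm
  set d : ℕ := y.den with hd
  have hdpos : 0 < d := y.pos
  have hdR : (0:ℝ) < (d:ℝ) := by exact_mod_cast hdpos
  set α : ℝ := (d:ℝ) * x with hα
  have hαirr : Irrational α := hirr.natCast_mul hdpos.ne'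
  set ψ : ℕ → ℝ := fun n =>
      ((Finset.Icc 1 (n+1)).inf' ⟨1, by simp⟩ (fun m : ℕ => cc α m)) / d with hψ
  have hψmem : ψ ∈ calD1 := by
    refine ⟨?_, ?_, ?_⟩
    · intro n
      apply div_nonneg _ hdR.le
      apply Finset.le_inf'
      intro m hm
      exact nrm1_nonneg _
    · intro n m hnm
      simp only [hψ]
      rw [div_le_div_iff_of_pos_right hdR]
      exact Finset.inf'_mono _ (Finset.Icc_subset_Icc_right (Nat.succ_le_succ hnm)) ⟨1, by simp⟩
    · intro hsum
      have : Summable (fun n : ℕ =>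
          (Finset.Icc 1 (n+1)).inf' ⟨1, by simp⟩ (fun m : ℕ => cc α m)) := by
        have := hsum.mul_right (d:ℝ)
        convert this using 2 with n
        · rfl
        rw [hψ]
        field_simp
      exact not_summable_M hαirr this
  have hfreq := hx ψ hψmem
  have hev : ∀ᶠ n : ℕ in atTop, ψ n ≤ nrm1 ((n:ℝ) * x + y) := by
    rw [eventually_atTop]
    refine ⟨1, fun n hn => ?_⟩
    have h1 : ψ n ≤ cc α n / d := by
      simp only [hψ]
      rw [div_le_div_iff_of_pos_right hdR]
      exact Finset.inf'_le _ (by simp [Finset.mem_Icc]; omega)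
    have h2 : cc α n = nrm1 ((d:ℝ) * ((n:ℝ) * x + y)) := by
      have harr : (d:ℝ) * ((n:ℝ) * x + (y:ℝ)) = (n:ℝ) * α + ((y.num : ℤ):ℝ) := by
        rw [hα]
        have : ((y.num : ℤ):ℝ) = (d:ℝ) * (y:ℝ) := by
          rw [Rat.cast_def, hd]
          field_simp
        rw [this]
        ring
      rw [harr, nrm1_add_int]
      rfl
    have h3 : nrm1 ((d:ℝ) * ((n:ℝ) * x + y)) ≤ d * nrm1 ((n:ℝ) * x + y) :=
      nrm1_nat_mul_le d _
    have h4 : cc α n / d ≤ nrm1 ((n:ℝ) * x + y) := by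
      rw [div_le_iff₀ hdR, h2]
      linarith [h3]
    exact le_trans h1 h4
  obtain ⟨n, hn1, hn2⟩ := (hfreq.and_eventually hev).exists
  linarith
end
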